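/- Let Ξ be a finite set and (p_{ij})_{i,j∈Ξ} a row-stochastic matrix (p_{ij} ≥ 0, Σ_j p_{ij} = 1) admitting a strictly positive stationary distribution (p_i) (Σ_i p_i p_{ij} = p_j), and suppose there exists N ≥ 1 such that all entries of the N-th matrix power of (p_{ij}) are strictly positive. Let G be a group acting on a probability space (X,μ) by invertible measure-preserving transformations with Koopman operators T_g, let γ : Ξ → G, and define P on L²(Ξ × X, p × μ) by (Pφ)_i = Σ_j p_{ij} T_{γ(i)}^{−1} φ_j. Then for every k ≥ 1, a function φ ∈ L²(Ξ × X, p × μ) satisfies P^k φ = φ if and only if for every sequence i₀, i₁, …, i_k in Ξ with p_{i_s i_{s+1}} > 0 for all 0 ≤ s ≤ k−1 one has φ_{i₀} = T_{γ(i₀)}^{−1} T_{γ(i₁)}^{−1} ⋯ T_{γ(i_{k−1})}^{−1} φ_{i_k}. -/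

import Mathlib

open MeasureTheory Filter

noncomputable section

/-- The Markov operator `(Pφ)_i = Σ_j p_{ij} T_{γ(i)}⁻¹ φ_j` on tuples `(φ_j)_{j∈Ξ}` of
`L²(X,μ)`-functions (identified with functions on `Ξ × X`). -/
def Pop {Ξ : Type*} [Fintype Ξ] {X : Type*} [MeasurableSpace X] {G : Type*} [Group G]
    (μ : Measure X) (p' : Ξ → Ξ → ℝ) (T : G → Lp ℝ 2 μ →L[ℝ] Lp ℝ 2 μ) (γ : Ξ → G)
    (φ : Ξ → Lp ℝ 2 μ) : Ξ → Lp ℝ 2 μ :=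
  fun i => ∑ j, p' i j • T (γ i)⁻¹ (φ j)

/-- The operator `(Uφ)_j = T_{ω(j)}⁻¹ φ_{ι(j)}`. -/
def Uop {Ξ : Type*} {X : Type*} [MeasurableSpace X] {G : Type*} [Group G]
    (μ : Measure X) (T : G → Lp ℝ 2 μ →L[ℝ] Lp ℝ 2 μ) (ι : Ξ → Ξ) (ω : Ξ → G)
    (φ : Ξ → Lp ℝ 2 μ) : Ξ → Lp ℝ 2 μ :=
  fun j => T (ω j)⁻¹ (φ (ι j))

/-- The inner product `⟨φ,ψ⟩ = Σ_j p_j ⟨φ_j, ψ_j⟩_{L²(X,μ)}` of `L²(Ξ × X, p × μ)`. -/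
def wip {Ξ : Type*} [Fintype Ξ] {X : Type*} [MeasurableSpace X]
    (μ : Measure X) (p : Ξ → ℝ) (φ ψ : Ξ → Lp ℝ 2 μ) : ℝ :=
  ∑ j, p j * (inner ℝ (φ j) (ψ j) : ℝ)

/-- `chainApply T [g₁,…,gₖ] ψ = T_{g₁}⁻¹ (T_{g₂}⁻¹ (⋯ (T_{gₖ}⁻¹ ψ)))`. -/
def chainApply {X : Type*} [MeasurableSpace X] {G : Type*} [Group G]
    (μ : Measure X) (T : G → Lp ℝ 2 μ →L[ℝ] Lp ℝ 2 μ)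
    (gs : List G) (ψ : Lp ℝ 2 μ) : Lp ℝ 2 μ :=
  gs.foldr (fun g acc => T g⁻¹ acc) ψ

open Finset in
lemma sq_norm_sum_smul {F : Type*} [NormedAddCommGroup F] [InnerProductSpace ℝ F]
    {J : Type*} [Fintype J] (w : J → ℝ) (v : J → F) :
    ‖∑ j, w j • v j‖ ^ 2 =
      (∑ j, w j) * (∑ j, w j * ‖v j‖ ^ 2)
        - (1 / 2) * ∑ j, ∑ l, w j * w l * ‖v j - v l‖ ^ 2 := by
  have hB : ‖∑ j, w j • v j‖ ^ 2 = ∑ j, ∑ l, w j * w l * (inner ℝ (v j) (v l) : ℝ) := by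
    rw [← real_inner_self_eq_norm_sq, sum_inner]
    refine Finset.sum_congr rfl fun j _ => ?_
    rw [real_inner_smul_left, inner_sum, Finset.mul_sum]
    refine Finset.sum_congr rfl fun l _ => ?_
    rw [real_inner_smul_right]; ring
  have hD : ∑ j, ∑ l, w j * w l * ‖v j - v l‖ ^ 2
      = 2 * ((∑ j, w j) * (∑ j, w j * ‖v j‖ ^ 2))
        - 2 * ∑ j, ∑ l, w j * w l * (inner ℝ (v j) (v l) : ℝ) := by
    have expand : ∀ j l : J, w j * w l * ‖v j - v l‖ ^ 2
        = w j * (w l * ‖v j‖ ^ 2) + w j * (w l * ‖v l‖ ^ 2)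
          - 2 * (w j * w l * (inner ℝ (v j) (v l) : ℝ)) := by
      intro j l
      rw [norm_sub_sq_real]; ring
    simp_rw [expand, Finset.sum_sub_distrib, Finset.sum_add_distrib, ← Finset.mul_sum,
      ← Finset.sum_mul]
    have h1 : ∑ x, w x * ((∑ i, w i) * ‖v x‖ ^ 2) = (∑ i, w i) * ∑ i, w i * ‖v i‖ ^ 2 := by
      rw [Finset.mul_sum]
      exact Finset.sum_congr rfl fun x _ => by ring
    rw [h1]
    ring
  linarith

section chainLemmas

variable {X : Type*} [MeasurableSpace X] {G : Type*} [Group G]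
    (μ : Measure X) (T : G → Lp ℝ 2 μ →L[ℝ] Lp ℝ 2 μ)

lemma chainApply_nil (ψ : Lp ℝ 2 μ) : chainApply μ T [] ψ = ψ := rfl

lemma chainApply_cons (g : G) (gs : List G) (ψ : Lp ℝ 2 μ) :
    chainApply μ T (g :: gs) ψ = T g⁻¹ (chainApply μ T gs ψ) := rfl

lemma chainApply_append (l1 l2 : List G) (ψ : Lp ℝ 2 μ) :
    chainApply μ T (l1 ++ l2) ψ = chainApply μ T l1 (chainApply μ T l2 ψ) :=
  List.foldr_append

lemma chainApply_inj (hinj : ∀ g : G, Function.Injective (T g)) (gs : List G) :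
    Function.Injective (chainApply μ T gs) := by
  induction gs with
  | nil => exact fun a b h => h
  | cons g gs ih => exact fun a b h => ih (hinj g⁻¹ h)

lemma chain_succ_back {Ξ : Type*} (γ : Ξ → G) (m : ℕ) (i : ℕ → Ξ) (ψ : Lp ℝ 2 μ) :
    chainApply μ T ((List.range (m+1)).map fun s => γ (i s)) ψ
      = chainApply μ T ((List.range m).map fun s => γ (i s)) (T (γ (i m))⁻¹ ψ) := by
  rw [List.range_succ, List.map_append, chainApply_append]
  rfl

lemma chain_succ_front {Ξ : Type*} (γ : Ξ → G) (m : ℕ) (i : ℕ → Ξ) (ψ : Lp ℝ 2 μ) :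
    chainApply μ T ((List.range (m+1)).map fun s => γ (i s)) ψ
      = T (γ (i 0))⁻¹ (chainApply μ T ((List.range m).map fun s => γ (i (s+1))) ψ) := by
  rw [List.range_succ_eq_map, List.map_cons, chainApply_cons, List.map_map]
  rfl

lemma chain_add {Ξ : Type*} (γ : Ξ → G) (m t : ℕ) (i : ℕ → Ξ) (ψ : Lp ℝ 2 μ) :
    chainApply μ T ((List.range (m+t)).map fun s => γ (i s)) ψ
      = chainApply μ T ((List.range m).map fun s => γ (i s))
          (chainApply μ T ((List.range t).map fun s => γ (i (m + s))) ψ) := by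
  rw [List.range_add, List.map_append, chainApply_append, List.map_map]
  rfl

end chainLemmas

/-- Characterization of the `L²`-solutions of `P^k φ = φ` for the Markov
operator `P` associated with an aperiodic irreducible stochastic matrix and a family of
Koopman operators. -/
theorem statement10
    {Ξ : Type*} [Fintype Ξ] [DecidableEq Ξ] {X : Type*} [MeasurableSpace X] {G : Type*} [Group G]
    (μ : Measure X) [IsProbabilityMeasure μ]
    -- the row-stochastic matrix with strictly positive stationary distribution
    (p : Ξ → ℝ) (hp : ∀ j, 0 < p j)
    (p' : Ξ → Ξ → ℝ) (hp'nn : ∀ i j, 0 ≤ p' i j) (hrow : ∀ i, ∑ j, p' i j = 1)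
    (hstat : ∀ j, ∑ i, p i * p' i j = p j)
    -- some matrix power has strictly positive entries
    (N : ℕ) (hN : 1 ≤ N) (hNpos : ∀ i j, 0 < (Matrix.of p' ^ N) i j)
    -- the measure-preserving action of G on (X,μ) by invertible transformations
    (S : G → X → X) (hS : ∀ g, MeasurePreserving (S g) μ μ)
    (hS1 : S 1 = id) (hSm : ∀ g g', S (g * g') = S g ∘ S g')
    -- the Koopman operators T_g f = f ∘ S g⁻¹ on L²(X,μ)
    (T : G → Lp ℝ 2 μ →L[ℝ] Lp ℝ 2 μ)
    (hT : ∀ g (f : Lp ℝ 2 μ), (T g f : X → ℝ) =ᵐ[μ] fun x => f (S g⁻¹ x))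
    (γ : Ξ → G)
    (k : ℕ) (hk : 1 ≤ k) (φ : Ξ → Lp ℝ 2 μ) :
    (Pop μ p' T γ)^[k] φ = φ ↔
      ∀ i : ℕ → Ξ, (∀ s, s < k → 0 < p' (i s) (i (s + 1))) →
        φ (i 0) = chainApply μ T ((List.range k).map fun s => γ (i s)) (φ (i k)) := by
  classical
  -- T g preserves norms
  have Tnorm : ∀ g (f : Lp ℝ 2 μ), ‖T g f‖ = ‖f‖ := by
    intro g f
    rw [Lp.norm_def, Lp.norm_def, eLpNorm_congr_ae (hT g f)]
    congr 1
    exact eLpNorm_comp_measurePreserving (Lp.aestronglyMeasurable f) (hS g⁻¹)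
  have Tinj : ∀ g, Function.Injective (T g) := by
    intro g u v h
    have h0 : ‖u - v‖ = 0 := by
      rw [← Tnorm g, map_sub, h, sub_self, norm_zero]
    exact sub_eq_zero.mp (norm_eq_zero.mp h0)
  -- path extensions
  have hfwd : ∀ i : Ξ, ∃ j, 0 < p' i j := by
    intro i
    by_contra h
    push_neg at h
    have : (∑ j, p' i j) ≤ 0 := Finset.sum_nonpos fun j _ => h j
    linarith [hrow i]
  choose next hnext using hfwd
  have hbwd : ∀ j : Ξ, ∃ i, 0 < p' i j := by
    intro j
    by_contra h
    push_neg at h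
    have hz : (∑ i, p i * p' i j) = 0 := Finset.sum_eq_zero fun i _ => by
      have : p' i j = 0 := le_antisymm (h i) (hp'nn i j)
      rw [this, mul_zero]
    rw [hstat j] at hz
    exact absurd hz (ne_of_gt (hp j))
  choose prev hprev using hbwd
  set P := Pop μ p' T γ with hPdef
  constructor
  · -- forward direction
    intro hfix i hi
    have step : ∀ s : ℕ, (∑ a, p a * ‖P^[s+1] φ a‖ ^ 2)
        = (∑ a, p a * ‖P^[s] φ a‖ ^ 2)
          - ∑ a, p a * ((1/2) * ∑ j, ∑ l,
              p' a j * p' a l * ‖P^[s] φ j - P^[s] φ l‖ ^ 2) := by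
      intro s
      have h1 : ∀ a, ‖P^[s+1] φ a‖ ^ 2
          = (∑ j, p' a j * ‖P^[s] φ j‖ ^ 2)
            - (1/2) * ∑ j, ∑ l, p' a j * p' a l * ‖P^[s] φ j - P^[s] φ l‖ ^ 2 := by
        intro a
        have hPs : P^[s+1] φ a = ∑ j, p' a j • T (γ a)⁻¹ (P^[s] φ j) := by
          rw [Function.iterate_succ_apply']
          rfl
        rw [hPs, sq_norm_sum_smul, hrow a, one_mul]
        congr 1
        · exact Finset.sum_congr rfl fun j _ => by rw [Tnorm]
        · congr 1
          refine Finset.sum_congr rfl fun j _ => Finset.sum_congr rfl fun l _ => ?_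
          rw [← map_sub, Tnorm]
      have h2 : ∑ a, p a * ∑ j, p' a j * ‖P^[s] φ j‖ ^ 2
          = ∑ j, p j * ‖P^[s] φ j‖ ^ 2 := by
        simp_rw [Finset.mul_sum]
        rw [Finset.sum_comm]
        refine Finset.sum_congr rfl fun j _ => ?_
        rw [← hstat j, Finset.sum_mul]
        exact Finset.sum_congr rfl fun a _ => by ring
      simp_rw [h1, mul_sub]
      rw [Finset.sum_sub_distrib, h2]
    have tele : ∑ s ∈ Finset.range k, (∑ a, p a * ((1/2) * ∑ j, ∑ l,
        p' a j * p' a l * ‖P^[s] φ j - P^[s] φ l‖ ^ 2)) = 0 := by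
      have heq : ∀ s : ℕ, (∑ a, p a * ((1/2) * ∑ j, ∑ l,
          p' a j * p' a l * ‖P^[s] φ j - P^[s] φ l‖ ^ 2))
          = (∑ a, p a * ‖P^[s] φ a‖ ^ 2) - (∑ a, p a * ‖P^[s+1] φ a‖ ^ 2) := by
        intro s
        rw [step s]
        ring
      rw [Finset.sum_congr rfl fun s _ => heq s, Finset.sum_range_sub'
        (fun s => ∑ a, p a * ‖P^[s] φ a‖ ^ 2) k]
      have e0 : P^[0] φ = φ := rfl
      rw [e0, hfix, sub_self]
    have Δnn : ∀ s, 0 ≤ ∑ a, p a * ((1/2) * ∑ j, ∑ l,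
        p' a j * p' a l * ‖P^[s] φ j - P^[s] φ l‖ ^ 2) := by
      intro s
      refine Finset.sum_nonneg fun a _ => mul_nonneg (hp a).le (mul_nonneg (by norm_num) ?_)
      refine Finset.sum_nonneg fun j _ => Finset.sum_nonneg fun l _ => ?_
      exact mul_nonneg (mul_nonneg (hp'nn a j) (hp'nn a l)) (sq_nonneg _)
    have rigid : ∀ s, s < k → ∀ a j l, 0 < p' a j → 0 < p' a l →
        P^[s] φ j = P^[s] φ l := by
      intro s hs a j l hj hl
      have hΔ0 : ∑ a, p a * ((1/2) * ∑ j, ∑ l,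
          p' a j * p' a l * ‖P^[s] φ j - P^[s] φ l‖ ^ 2) = 0 :=
        (Finset.sum_eq_zero_iff_of_nonneg fun s _ => Δnn s).mp tele s
          (Finset.mem_range.mpr hs)
      have hnn1 : ∀ a ∈ (Finset.univ : Finset Ξ), 0 ≤ p a * ((1/2) * ∑ j, ∑ l,
          p' a j * p' a l * ‖P^[s] φ j - P^[s] φ l‖ ^ 2) := by
        intro a _
        refine mul_nonneg (hp a).le (mul_nonneg (by norm_num) ?_)
        refine Finset.sum_nonneg fun j _ => Finset.sum_nonneg fun l _ => ?_
        exact mul_nonneg (mul_nonneg (hp'nn a j) (hp'nn a l)) (sq_nonneg _)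
      have ha0 : p a * ((1/2) * ∑ j, ∑ l,
          p' a j * p' a l * ‖P^[s] φ j - P^[s] φ l‖ ^ 2) = 0 :=
        (Finset.sum_eq_zero_iff_of_nonneg hnn1).mp hΔ0 a (Finset.mem_univ a)
      have hsum0 : ∑ j, ∑ l, p' a j * p' a l * ‖P^[s] φ j - P^[s] φ l‖ ^ 2 = 0 := by
        rcases mul_eq_zero.mp ha0 with h | h
        · exact absurd h (ne_of_gt (hp a))
        · rcases mul_eq_zero.mp h with h' | h'
          · norm_num at h'
          · exact h'
      have hnn2 : ∀ j' ∈ (Finset.univ : Finset Ξ),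
          0 ≤ ∑ l', p' a j' * p' a l' * ‖P^[s] φ j' - P^[s] φ l'‖ ^ 2 := by
        intro j' _
        refine Finset.sum_nonneg fun l' _ => ?_
        exact mul_nonneg (mul_nonneg (hp'nn a j') (hp'nn a l')) (sq_nonneg _)
      have hj0 : ∑ l', p' a j * p' a l' * ‖P^[s] φ j - P^[s] φ l'‖ ^ 2 = 0 :=
        (Finset.sum_eq_zero_iff_of_nonneg hnn2).mp hsum0 j (Finset.mem_univ j)
      have hnn3 : ∀ l' ∈ (Finset.univ : Finset Ξ),
          0 ≤ p' a j * p' a l' * ‖P^[s] φ j - P^[s] φ l'‖ ^ 2 := by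
        intro l' _
        exact mul_nonneg (mul_nonneg (hp'nn a j) (hp'nn a l')) (sq_nonneg _)
      have hjl : p' a j * p' a l * ‖P^[s] φ j - P^[s] φ l‖ ^ 2 = 0 :=
        (Finset.sum_eq_zero_iff_of_nonneg hnn3).mp hj0 l (Finset.mem_univ l)
      have hnorm : ‖P^[s] φ j - P^[s] φ l‖ ^ 2 = 0 := by
        rcases mul_eq_zero.mp hjl with h | h
        · rcases mul_eq_zero.mp h with h' | h'
          · exact absurd h' (ne_of_gt hj)
          · exact absurd h' (ne_of_gt hl)
        · exact h
      have : ‖P^[s] φ j - P^[s] φ l‖ = 0 := by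
        have := sq_eq_zero_iff.mp hnorm
        exact this
      exact sub_eq_zero.mp (norm_eq_zero.mp this)
    have edge : ∀ s, s < k → ∀ a b, 0 < p' a b →
        P^[s+1] φ a = T (γ a)⁻¹ (P^[s] φ b) := by
      intro s hs a b hab
      have hPs : P^[s+1] φ a = ∑ j, p' a j • T (γ a)⁻¹ (P^[s] φ j) := by
        rw [Function.iterate_succ_apply']
        rfl
      rw [hPs]
      have hcon : ∀ j ∈ (Finset.univ : Finset Ξ),
          p' a j • T (γ a)⁻¹ (P^[s] φ j) = p' a j • T (γ a)⁻¹ (P^[s] φ b) := by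
        intro j _
        rcases (hp'nn a j).eq_or_lt with h | h
        · rw [← h, zero_smul, zero_smul]
        · rw [rigid s hs a j b h hab]
      rw [Finset.sum_congr rfl hcon, ← Finset.sum_smul, hrow a, one_smul]
    have main : ∀ m, m ≤ k → φ (i 0)
        = chainApply μ T ((List.range m).map fun s => γ (i s)) (P^[k - m] φ (i m)) := by
      intro m
      induction m with
      | zero =>
        intro _
        show φ (i 0) = P^[k] φ (i 0)
        rw [hfix]
      | succ m ih =>
        intro hm
        rw [ih (Nat.le_of_succ_le hm), chain_succ_back]
        congr 1
        have hkm : k - m = (k - (m+1)) + 1 := by omega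
        rw [hkm]
        exact edge (k - (m+1)) (by omega) (i m) (i (m+1)) (hi m (by omega))
    have := main k le_rfl
    rwa [Nat.sub_self, Function.iterate_zero_apply] at this
  · -- reverse direction
    intro H
    -- key lemma: chains of equal length with the same start agree
    have keyL : ∀ ℓ, ℓ ≤ k → ∀ a b : ℕ → Ξ,
        (∀ s, s < ℓ → 0 < p' (a s) (a (s+1))) →
        (∀ s, s < ℓ → 0 < p' (b s) (b (s+1))) → a 0 = b 0 →
        chainApply μ T ((List.range ℓ).map fun s => γ (a s)) (φ (a ℓ))
          = chainApply μ T ((List.range ℓ).map fun s => γ (b s)) (φ (b ℓ)) := by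
      intro ℓ hℓ a b ha hb hab
      set m := k - ℓ with hm
      have hkml : k = m + ℓ := by omega
      set A : ℕ → Ξ := fun n => if n < m then prev^[m - n] (a 0) else a (n - m) with hA
      set B : ℕ → Ξ := fun n => if n < m then prev^[m - n] (b 0) else b (n - m) with hB
      have hAeq : ∀ n, n < m → A n = prev^[m - n] (a 0) := fun n hn => by
        simp [hA, hn]
      have hAeq2 : ∀ n, m ≤ n → A n = a (n - m) := fun n hn => by
        simp [hA, Nat.not_lt.mpr hn]
      have hBeq : ∀ n, n < m → B n = prev^[m - n] (b 0) := fun n hn => by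
        simp [hB, hn]
      have hBeq2 : ∀ n, m ≤ n → B n = b (n - m) := fun n hn => by
        simp [hB, Nat.not_lt.mpr hn]
      have hAB : ∀ n, n < m → A n = B n := by
        intro n hn
        rw [hAeq n hn, hBeq n hn, hab]
      have admis : ∀ (c : ℕ → Ξ) (C : ℕ → Ξ),
          (∀ s, s < ℓ → 0 < p' (c s) (c (s+1))) →
          (∀ n, n < m → C n = prev^[m - n] (c 0)) →
          (∀ n, m ≤ n → C n = c (n - m)) →
          ∀ s, s < k → 0 < p' (C s) (C (s+1)) := by
        intro c C hc hC1 hC2 s hs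
        by_cases h1 : s + 1 ≤ m
        · have hsm : s < m := by omega
          have e1 : C s = prev^[m - s] (c 0) := hC1 s hsm
          have e2 : C (s+1) = prev^[m - (s+1)] (c 0) := by
            by_cases h2 : s + 1 < m
            · exact hC1 (s+1) h2
            · have : s + 1 = m := by omega
              rw [hC2 (s+1) (by omega), this]
              simp
          have e3 : m - s = (m - (s+1)) + 1 := by omega
          rw [e1, e2, e3, Function.iterate_succ_apply']
          exact hprev _
        · have hms : m ≤ s := by omega
          have e1 : C s = c (s - m) := hC2 s hms
          have e2 : C (s+1) = c ((s - m) + 1) := by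
            rw [hC2 (s+1) (by omega)]
            congr 1
            omega
          rw [e1, e2]
          exact hc (s - m) (by omega)
      have hAadm := admis a A ha hAeq hAeq2
      have hBadm := admis b B hb hBeq hBeq2
      have HA := H A hAadm
      have HB := H B hBadm
      rw [hkml] at HA HB
      rw [chain_add] at HA HB
      have hAm : ∀ s, A (m + s) = a s := by
        intro s
        rw [hAeq2 (m + s) (by omega)]
        congr 1
        omega
      have hBm : ∀ s, B (m + s) = b s := by
        intro s
        rw [hBeq2 (m + s) (by omega)]
        congr 1
        omega
      have hAmap : ((List.range ℓ).map fun s => γ (A (m + s)))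
          = (List.range ℓ).map fun s => γ (a s) := by
        refine List.map_congr_left fun s _ => ?_
        rw [hAm s]
      have hBmap : ((List.range ℓ).map fun s => γ (B (m + s)))
          = (List.range ℓ).map fun s => γ (b s) := by
        refine List.map_congr_left fun s _ => ?_
        rw [hBm s]
      have hAmmap : ((List.range m).map fun s => γ (A s))
          = (List.range m).map fun s => γ (B s) := by
        refine List.map_congr_left fun s hs => ?_
        rw [hAB s (List.mem_range.mp hs)]
      have hA0B0 : A 0 = B 0 := by
        by_cases h : 0 < m
        · exact hAB 0 h
        · have hm0 : m = 0 := by omega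
          rw [hAeq2 0 (by omega), hBeq2 0 (by omega)]
          simpa [hm0] using hab
      have hAend : A (m + ℓ) = a ℓ := hAm ℓ
      have hBend : B (m + ℓ) = b ℓ := hBm ℓ
      rw [hAmap, hAend] at HA
      rw [hBmap, hBend] at HB
      rw [hA0B0, hAmmap] at HA
      have := HA.symm.trans HB
      exact chainApply_inj μ T Tinj _ this
    -- inductive expansion of P^[t]
    have Sind : ∀ t, t ≤ k → ∀ j : ℕ → Ξ, (∀ s, s < t → 0 < p' (j s) (j (s+1))) →
        (P^[t] φ) (j 0)
          = chainApply μ T ((List.range t).map fun s => γ (j s)) (φ (j t)) := by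
      intro t
      induction t with
      | zero =>
        intro _ j _
        rfl
      | succ t ih =>
        intro ht j hj
        have hPs : P^[t+1] φ (j 0) = ∑ l, p' (j 0) l • T (γ (j 0))⁻¹ (P^[t] φ l) := by
          rw [Function.iterate_succ_apply']
          rfl
        rw [hPs]
        have hcon : ∀ l ∈ (Finset.univ : Finset Ξ),
            p' (j 0) l • T (γ (j 0))⁻¹ (P^[t] φ l)
              = p' (j 0) l • chainApply μ T
                  ((List.range (t+1)).map fun s => γ (j s)) (φ (j (t+1))) := by
          intro l _
          rcases (hp'nn (j 0) l).eq_or_lt with h | h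
          · rw [← h, zero_smul, zero_smul]
          · congr 1
            -- build the comparison path c
            set c : ℕ → Ξ := fun n => if n = 0 then j 0 else next^[n - 1] l with hc
            have hc0 : c 0 = j 0 := rfl
            have hcs : ∀ n, c (n + 1) = next^[n] l := fun n => by simp [hc]
            have hcadm : ∀ s, s < t + 1 → 0 < p' (c s) (c (s+1)) := by
              intro s _
              match s with
              | 0 => simpa [hc] using h
              | Nat.succ s =>
                have hstep : 0 < p' (next^[s] l) (next^[s+1] l) := by
                  rw [Function.iterate_succ_apply']
                  exact hnext _
                simpa [hc] using hstep
            have htail : (P^[t] φ) l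
                = chainApply μ T ((List.range t).map fun s => γ (c (s+1)))
                    (φ (c (t+1))) := by
              have hthis := ih (by omega) (fun n => c (n + 1)) (fun s hs => hcadm (s+1) (by omega))
              have hc1 : c 1 = l := by simp [hc]
              simpa [hc1] using hthis
            rw [htail, ← hc0, ← chain_succ_front μ T γ t c (φ (c (t+1)))]
            exact keyL (t+1) ht c j hcadm hj hc0
        rw [Finset.sum_congr rfl hcon, ← Finset.sum_smul, hrow (j 0), one_smul]
    funext i₀
    have hjadm : ∀ s, s < k → 0 < p' (next^[s] i₀) (next^[s+1] i₀) := by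
      intro s _
      rw [Function.iterate_succ_apply']
      exact hnext _
    have h1 := Sind k le_rfl (fun n => next^[n] i₀) hjadm
    have h2 := H (fun n => next^[n] i₀) hjadm
    have h0 : next^[0] i₀ = i₀ := rfl
    rw [h0] at h1 h2
    rw [h1, ← h2]
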